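/- Let f, g be differentiable on [a,b] with g > 0 on [a,b] and g' > 0 on [a,b). Define Y_{f,g}(x) = (f'(x)/g'(x))·g(x) − f(x). If f'/g' is increasing on [a,b] and Y_{f,g}(a) ≥ 0, then f/g is increasing on [a,b]. -/

import Mathlib

open Set

theorem second_kind_rule_increasing (a b : ℝ) (hab : a < b) (f g : ℝ → ℝ)
    (hf : ∀ x ∈ Icc a b, DifferentiableAt ℝ f x)
    (hg : ∀ x ∈ Icc a b, DifferentiableAt ℝ g x)
    (hgpos : ∀ x ∈ Icc a b, 0 < g x)
    (hg' : ∀ x ∈ Ico a b, 0 < deriv g x)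
    (hmono : MonotoneOn (fun x => deriv f x / deriv g x) (Icc a b))
    (hYa : 0 ≤ deriv f a / deriv g a * g a - f a) :
    MonotoneOn (fun x => f x / g x) (Icc a b) := by
  have hfc : ContinuousOn f (Icc a b) := fun x hx => (hf x hx).continuousAt.continuousWithinAt
  have hgc : ContinuousOn g (Icc a b) := fun x hx => (hg x hx).continuousAt.continuousWithinAt
  have hgmono : MonotoneOn g (Icc a b) := by
    apply monotoneOn_of_deriv_nonneg (convex_Icc a b) hgc
    · intro x hx
      rw [interior_Icc] at hx
      exact (hg x (Ioo_subset_Icc_self hx)).differentiableWithinAt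
    · intro x hx
      rw [interior_Icc] at hx
      exact (hg' x ⟨hx.1.le, hx.2⟩).le
  have hY : ∀ x ∈ Ico a b, 0 ≤ deriv f x / deriv g x * g x - f x := by
    intro x hx
    rcases eq_or_lt_of_le hx.1 with heq | hax
    · rw [← heq]; exact hYa
    · have hIcc : Icc a x ⊆ Icc a b := Icc_subset_Icc le_rfl hx.2.le
      have hIoo : Ioo a x ⊆ Icc a b := fun y hy => hIcc (Ioo_subset_Icc_self hy)
      obtain ⟨c, hc, hceq⟩ :=
        exists_ratio_deriv_eq_ratio_slope f hax (hfc.mono hIcc)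
          (fun y hy => (hf y (hIoo hy)).differentiableWithinAt) g (hgc.mono hIcc)
          (fun y hy => (hg y (hIoo hy)).differentiableWithinAt)
      have hcIcc : c ∈ Icc a b := hIoo hc
      have hgc' : 0 < deriv g c := hg' c ⟨hcIcc.1, lt_of_lt_of_le hc.2 hx.2.le⟩
      have hxIcc : x ∈ Icc a b := ⟨hx.1, hx.2.le⟩
      -- f x - f a = (g x - g a) * (f'/g')(c)
      have hfx : f x - f a = (g x - g a) * (deriv f c / deriv g c) := by
        field_simp
        linarith [hceq]
      have hgxa : 0 ≤ g x - g a := sub_nonneg.2 (hgmono (left_mem_Icc.2 hab.le) hxIcc hx.1)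
      have hrcx : deriv f c / deriv g c ≤ deriv f x / deriv g x :=
        hmono hcIcc hxIcc hc.2.le
      have hrax : deriv f a / deriv g a ≤ deriv f x / deriv g x :=
        hmono (left_mem_Icc.2 hab.le) hxIcc hx.1
      have hga : 0 < g a := hgpos a (left_mem_Icc.2 hab.le)
      have h1 : f x ≤ f a + (g x - g a) * (deriv f x / deriv g x) := by
        rw [show f x = f a + (g x - g a) * (deriv f c / deriv g c) by linarith [hfx]]
        have := mul_le_mul_of_nonneg_left hrcx hgxa
        linarith
      have h2 : deriv f a / deriv g a * g a ≤ deriv f x / deriv g x * g a :=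
        mul_le_mul_of_nonneg_right hrax hga.le
      nlinarith
  apply monotoneOn_of_deriv_nonneg (convex_Icc a b)
  · exact hfc.div hgc (fun x hx => (hgpos x hx).ne')
  · intro x hx
    rw [interior_Icc] at hx
    have hxI : x ∈ Icc a b := Ioo_subset_Icc_self hx
    exact ((hf x hxI).div (hg x hxI) (hgpos x hxI).ne').differentiableWithinAt
  · intro x hx
    rw [interior_Icc] at hx
    have hxI : x ∈ Icc a b := Ioo_subset_Icc_self hx
    have hgx : 0 < g x := hgpos x hxI
    have hgx' : 0 < deriv g x := hg' x ⟨hx.1.le, hx.2⟩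
    rw [deriv_fun_div (hf x hxI) (hg x hxI) hgx.ne']
    have hYx := hY x ⟨hx.1.le, hx.2⟩
    have hnum : 0 ≤ deriv f x * g x - f x * deriv g x := by
      have : deriv f x / deriv g x * g x - f x = (deriv f x * g x - f x * deriv g x) / deriv g x := by
        field_simp
      rw [this] at hYx
      exact (div_nonneg_iff.mp hYx).resolve_right (fun h => absurd h.2 (not_le.2 hgx')) |>.1
    positivity
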